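/- Let α be a finite type with decidable equality and let σ₁, σ₂ ∈ Equiv.Perm α with σ₁ ≠ σ₂, and suppose each generator moves exactly 4 points: (σ₁.support).card = 4 and (σ₂.support).card = 4. Then the subgroup Subgroup.closure {σ₁, σ₂} of Equiv.Perm α is not a simple group. -/

import Mathlib

lemma involution_of_even_support_four {α : Type*} [Fintype α] [DecidableEq α]
    (σ : Equiv.Perm α) (hsgn : Equiv.Perm.sign σ = 1) (hs : σ.support.card = 4) :
    σ * σ = 1 := by
  have hsum : σ.cycleType.sum = 4 := by rw [Equiv.Perm.sum_cycleType]; exact hs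
  have h2 : ∀ x ∈ σ.cycleType, 2 ≤ x := fun x hx => Equiv.Perm.two_le_of_mem_cycleType hx
  have hcardle : Multiset.card σ.cycleType * 2 ≤ 4 := by
    have h' := Multiset.card_nsmul_le_sum h2
    rw [smul_eq_mul, hsum] at h'
    exact h'
  have heven : Even (Multiset.card σ.cycleType) := by
    rcases Nat.even_or_odd (Multiset.card σ.cycleType) with h | h
    · exact h
    · exfalso
      have hodd : Odd (σ.cycleType.sum + Multiset.card σ.cycleType) := by
        rw [hsum]
        exact (by decide : Even 4).add_odd h
      rw [Equiv.Perm.sign_of_cycleType, Odd.neg_one_pow hodd] at hsgn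
      exact absurd hsgn (by decide)
  have hcard0 : Multiset.card σ.cycleType ≠ 0 := by
    intro h
    rw [Multiset.card_eq_zero] at h
    rw [h] at hsum
    simp at hsum
  have hcard : Multiset.card σ.cycleType = 2 := by
    obtain ⟨r, hr⟩ := heven
    omega
  obtain ⟨x, y, hxy⟩ := Multiset.card_eq_two.mp hcard
  have hx2 : 2 ≤ x := h2 x (by rw [hxy]; simp)
  have hy2 : 2 ≤ y := h2 y (by rw [hxy]; simp)
  rw [hxy] at hsum
  simp [Multiset.insert_eq_cons] at hsum
  have hxx : x = 2 := by omega
  have hyy : y = 2 := by omega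
  have horder : orderOf σ = 2 := by
    rw [← Equiv.Perm.lcm_cycleType, hxy, hxx, hyy]
    decide
  have := pow_orderOf_eq_one σ
  rw [horder, pow_two] at this
  exact this

lemma not_simple_of_two_involutions {G : Type*} [Group G] (a b : G)
    (ha : a * a = 1) (hb : b * b = 1) (hab : a ≠ b) (ha1 : a ≠ 1) (hb1 : b ≠ 1)
    (htop : Subgroup.closure ({a, b} : Set G) = ⊤) : ¬ IsSimpleGroup G := by
  intro hG
  have hainv : a⁻¹ = a := inv_eq_of_mul_eq_one_right ha
  have hbinv : b⁻¹ = b := inv_eq_of_mul_eq_one_right hb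
  set c := a * b with hc
  have hc1 : c ≠ 1 := by
    intro h
    apply hab
    have h' : a = b⁻¹ := eq_inv_of_mul_eq_one_left h
    rw [hbinv] at h'
    exact h'
  have hconj_a : a * c * a⁻¹ = c⁻¹ := by
    rw [hc, hainv, mul_inv_rev, hainv, hbinv]
    calc a * (a * b) * a = (a * a) * (b * a) := by group
    _ = b * a := by rw [ha, one_mul]
  have hconj_b : b * c * b⁻¹ = c⁻¹ := by
    rw [hc, hbinv, mul_inv_rev, hainv, hbinv]
    calc b * (a * b) * b = (b * a) * (b * b) := by group
    _ = b * a := by rw [hb, mul_one]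
  have hmem : ∀ g ∈ ({a, b} : Set G), g ∈ Subgroup.normalizer (Subgroup.zpowers c : Set G) := by
    intro g hg
    have hgc : g * c * g⁻¹ = c⁻¹ := by
      rcases hg with h | h
      · rw [h]; exact hconj_a
      · rw [h]; exact hconj_b
    have hginv : g⁻¹ = g := by
      rcases hg with h | h
      · rw [h]; exact hainv
      · rw [h]; exact hbinv
    rw [Subgroup.mem_normalizer_iff]
    intro x
    constructor
    · intro hxm
      obtain ⟨n, rfl⟩ := Subgroup.mem_zpowers_iff.mp hxm
      exact Subgroup.mem_zpowers_iff.mpr ⟨-n, by rw [← conj_zpow, hgc, inv_zpow, zpow_neg]⟩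
    · intro hxm
      obtain ⟨n, hn⟩ := Subgroup.mem_zpowers_iff.mp hxm
      have hgc' : g⁻¹ * c * g⁻¹⁻¹ = c⁻¹ := by rw [hginv]; exact hgc
      have hx : x = g⁻¹ * c ^ n * g⁻¹⁻¹ := by rw [hn]; group
      exact Subgroup.mem_zpowers_iff.mpr
        ⟨-n, by rw [hx, ← conj_zpow, hgc', inv_zpow, zpow_neg]⟩
  have hnorm : Subgroup.normalizer (Subgroup.zpowers c : Set G) = ⊤ := by
    rw [eq_top_iff, ← htop]
    exact (Subgroup.closure_le _).mpr hmem
  have hN : (Subgroup.zpowers c).Normal := Subgroup.normalizer_eq_top_iff.mp hnorm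
  rcases hG.eq_bot_or_eq_top_of_normal _ hN with h | h
  · have hmc := Subgroup.mem_zpowers c
    rw [h, Subgroup.mem_bot] at hmc
    exact hc1 hmc
  · have haz : a ∈ Subgroup.zpowers c := h ▸ Subgroup.mem_top a
    have hbz : b ∈ Subgroup.zpowers c := h ▸ Subgroup.mem_top b
    obtain ⟨m, hm⟩ := Subgroup.mem_zpowers_iff.mp haz
    obtain ⟨n, hn⟩ := Subgroup.mem_zpowers_iff.mp hbz
    have comm : a * b = b * a := by rw [← hm, ← hn, ← zpow_add, ← zpow_add, add_comm]
    have hcc : c ^ (2 : ℤ) = 1 := by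
      rw [zpow_two, hc]
      calc a * b * (a * b) = a * (b * a) * b := by group
      _ = a * (a * b) * b := by rw [← comm]
      _ = (a * a) * (b * b) := by group
      _ = 1 := by rw [ha, hb, one_mul]
    have hkey : ∀ k : ℤ, c ^ k = 1 ∨ c ^ k = c := by
      intro k
      rcases Int.even_or_odd k with ⟨j, hj⟩ | ⟨j, hj⟩
      · left
        rw [show k = 2 * j by omega, zpow_mul, hcc, one_zpow]
      · right
        rw [show k = 2 * j + 1 by omega, zpow_add, zpow_mul, hcc, one_zpow, one_mul, zpow_one]
    rcases hkey m with h1 | h1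
    · exact ha1 (by rw [← hm, h1])
    · have hac : a = a * b := by rw [← hc, ← h1, hm]
      have : a * b = a * 1 := by rw [mul_one, ← hac]
      exact hb1 (mul_left_cancel this)

theorem closure_of_two_support_four_not_simple {α : Type*} [Fintype α] [DecidableEq α]
    (σ₁ σ₂ : Equiv.Perm α) (h12 : σ₁ ≠ σ₂)
    (hs1 : σ₁.support.card = 4) (hs2 : σ₂.support.card = 4) :
    ¬ IsSimpleGroup (Subgroup.closure ({σ₁, σ₂} : Set (Equiv.Perm α))) := by
  intro hsimple
  set K := Subgroup.closure ({σ₁, σ₂} : Set (Equiv.Perm α)) with hK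
  have hm1 : σ₁ ∈ K := Subgroup.subset_closure (by simp)
  have hm2 : σ₂ ∈ K := Subgroup.subset_closure (by simp)
  have hne1 : σ₁ ≠ 1 := by intro h; rw [h] at hs1; simp at hs1
  have hne2 : σ₂ ≠ 1 := by intro h; rw [h] at hs2; simp at hs2
  by_cases hsgn : Equiv.Perm.sign σ₁ = 1 ∧ Equiv.Perm.sign σ₂ = 1
  · obtain ⟨hg1, hg2⟩ := hsgn
    have hi1 := involution_of_even_support_four σ₁ hg1 hs1
    have hi2 := involution_of_even_support_four σ₂ hg2 hs2
    refine not_simple_of_two_involutions (G := K) ⟨σ₁, hm1⟩ ⟨σ₂, hm2⟩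
      (Subtype.ext hi1) (Subtype.ext hi2)
      (fun h => h12 (congrArg Subtype.val h))
      (fun h => hne1 (congrArg Subtype.val h))
      (fun h => hne2 (congrArg Subtype.val h)) ?_ hsimple
    rw [eq_top_iff, ← Subgroup.closure_closure_coe_preimage (k := ({σ₁, σ₂} : Set (Equiv.Perm α)))]
    apply Subgroup.closure_mono
    rintro ⟨x, hx⟩ hmem
    simp only [Set.mem_preimage, Set.mem_insert_iff, Set.mem_singleton_iff] at hmem ⊢
    rcases hmem with h | h
    · exact Or.inl (Subtype.ext h)
    · exact Or.inr (Subtype.ext h)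
  · obtain ⟨τ, hτK, hτs⟩ : ∃ τ, τ ∈ K ∧ Equiv.Perm.sign τ = -1 := by
      rcases Int.units_eq_one_or (Equiv.Perm.sign σ₁) with h1 | h1
      · rcases Int.units_eq_one_or (Equiv.Perm.sign σ₂) with h2 | h2
        · exact absurd ⟨h1, h2⟩ hsgn
        · exact ⟨σ₂, hm2, h2⟩
      · exact ⟨σ₁, hm1, h1⟩
    set f : K →* ℤˣ := Equiv.Perm.sign.comp K.subtype with hf
    rcases hsimple.eq_bot_or_eq_top_of_normal f.ker f.normal_ker with hker | hker
    · have hinj : Function.Injective f := (MonoidHom.ker_eq_bot_iff f).mp hker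
      have e1 : f ⟨σ₁, hm1⟩ ≠ 1 := by
        intro h
        have h' : (⟨σ₁, hm1⟩ : K) = 1 := hinj (by rw [h, map_one])
        exact hne1 (congrArg Subtype.val h')
      have e2 : f ⟨σ₂, hm2⟩ ≠ 1 := by
        intro h
        have h' : (⟨σ₂, hm2⟩ : K) = 1 := hinj (by rw [h, map_one])
        exact hne2 (congrArg Subtype.val h')
      have e12 : f ⟨σ₁, hm1⟩ ≠ f ⟨σ₂, hm2⟩ := by
        intro h
        exact h12 (congrArg Subtype.val (hinj h))
      rcases Int.units_eq_one_or (f ⟨σ₁, hm1⟩) with h1 | h1 <;>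
        rcases Int.units_eq_one_or (f ⟨σ₂, hm2⟩) with h2 | h2
      · exact e1 h1
      · exact e1 h1
      · exact e2 h2
      · exact e12 (h1.trans h2.symm)
    · have hmemk : (⟨τ, hτK⟩ : K) ∈ f.ker := by rw [hker]; exact Subgroup.mem_top _
      rw [MonoidHom.mem_ker] at hmemk
      simp only [hf, MonoidHom.comp_apply, Subgroup.coe_subtype] at hmemk
      rw [hτs] at hmemk
      exact absurd hmemk (by decide)
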